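/- arXiv:1206.5929 — 3 statements merged into one kernel-verified Lean document; each statement's English description precedes it below -/
import Mathlib

section
/- There exists a constant D > 0 such that Σ_{n ≤ t} 1/φ(n) = D·log t + O(1) for all real t ≥ 1. -/
open Finset ArithmeticFunction
open scoped ArithmeticFunction.Moebius ArithmeticFunction.zeta

theorem odd_le_totient_sq : ∀ n : ℕ, Odd n → n ≤ n.totient ^ 2 := by
  intro n
  induction n using Nat.recOnPosPrimePosCoprime with
  | prime_pow p k hp hk =>
    intro hodd
    have hp2 : 3 ≤ p := by
      rcases hp.eq_two_or_odd' with h | h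
      · exfalso
        subst h
        have hev : Even (2 ^ k) := by
          rw [Nat.even_pow]; exact ⟨even_two, hk.ne'⟩
        rw [← Nat.not_odd_iff_even] at hev
        exact hev hodd
      · rcases Nat.lt_or_ge p 3 with h3 | h3
        · interval_cases p <;> simp_all [Nat.odd_iff] <;> exact (Nat.not_prime_one ‹_›).elim
        · exact h3
    obtain ⟨q, rfl⟩ : ∃ q, p = q + 1 := ⟨p - 1, by omega⟩
    have hq2 : 2 ≤ q := by omega
    rw [Nat.totient_prime_pow hp hk]
    have hqsq : q + 1 ≤ q ^ 2 := by nlinarith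
    simp only [Nat.add_sub_cancel]
    calc (q+1) ^ k ≤ (q+1) ^ (2 * k - 1) := Nat.pow_le_pow_right (by omega) (by omega)
      _ = ((q+1) ^ (k-1)) ^ 2 * (q+1) := by rw [← pow_mul, ← pow_succ]; congr 1; omega
      _ ≤ ((q+1) ^ (k-1)) ^ 2 * q ^ 2 := Nat.mul_le_mul_left _ hqsq
      _ = ((q+1) ^ (k - 1) * q) ^ 2 := by rw [mul_pow]
  | zero => intro h; simp at h
  | one => intro _; simp
  | coprime a b ha hb hab iha ihb =>
    intro hodd
    rw [Nat.odd_mul] at hodd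
    rw [Nat.totient_mul hab, mul_pow]
    exact Nat.mul_le_mul (iha hodd.1) (ihb hodd.2)

theorem le_two_mul_totient_sq (n : ℕ) (hn : 1 ≤ n) : n ≤ 2 * n.totient ^ 2 := by
  rcases n.even_or_odd with he | ho
  · set a := n.factorization 2 with ha
    set m := ordCompl[2] n with hm
    have hn0 : n ≠ 0 := by omega
    have hsplit : 2 ^ a * m = n := Nat.ordProj_mul_ordCompl_eq_self n 2
    have hmodd : Odd m := by
      have h2 := Nat.not_dvd_ordCompl Nat.prime_two hn0
      rw [← hm] at h2
      rw [Nat.odd_iff, ← Nat.two_dvd_ne_zero]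
      exact h2
    have ha1 : 1 ≤ a := by
      have h2 : 2 ∣ n := he.two_dvd
      have := (Nat.Prime.dvd_iff_one_le_factorization Nat.prime_two hn0).mp h2
      omega
    have hcop : Nat.Coprime (2 ^ a) m := by
      have h2 := Nat.Coprime.pow_left a (Nat.coprime_ordCompl Nat.prime_two hn0)
      exact h2
    have htot : n.totient = 2 ^ (a - 1) * m.totient := by
      rw [← hsplit, Nat.totient_mul hcop, Nat.totient_prime_pow Nat.prime_two ha1]
      ring_nf
    rw [htot]
    calc n = 2 ^ a * m := hsplit.symm
      _ ≤ 2 ^ a * m.totient ^ 2 := Nat.mul_le_mul_left _ (odd_le_totient_sq m hmodd)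
      _ ≤ 2 * (2 ^ (a-1))^2 * m.totient ^ 2 := by
          apply Nat.mul_le_mul_right
          rw [← pow_mul, ← pow_succ']
          exact Nat.pow_le_pow_right (by norm_num) (by omega)
      _ = 2 * (2 ^ (a - 1) * m.totient) ^ 2 := by ring
  · calc n ≤ n.totient ^ 2 := odd_le_totient_sq n ho
      _ ≤ 2 * n.totient ^ 2 := Nat.le_mul_of_pos_left _ (by norm_num)


noncomputable def Gfun : ArithmeticFunction ℝ :=
  ⟨fun n => if n = 0 then 0 else (μ n : ℝ)^2 / (Nat.totient n), by simp⟩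

noncomputable def Hfun : ArithmeticFunction ℝ :=
  ⟨fun n => (n : ℝ) / (Nat.totient n), by simp⟩

theorem Gfun_apply {n : ℕ} (hn : n ≠ 0) : Gfun n = (μ n : ℝ)^2 / (Nat.totient n) := by
  simp [Gfun, hn]

theorem Gfun_mult : Gfun.IsMultiplicative := by
  constructor
  · simp [Gfun]
  · intro m n hmn
    rcases eq_or_ne m 0 with rfl | hm
    · have : n = 1 := by simpa using hmn
      subst this; simp [Gfun]
    rcases eq_or_ne n 0 with rfl | hn
    · have : m = 1 := by simpa using hmn
      subst this; simp [Gfun]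
    rw [Gfun_apply (mul_ne_zero hm hn), Gfun_apply hm, Gfun_apply hn,
      Nat.totient_mul hmn, isMultiplicative_moebius.map_mul_of_coprime hmn]
    push_cast
    rw [mul_pow]
    rw [div_mul_div_comm]

theorem Hfun_mult : Hfun.IsMultiplicative := by
  constructor
  · simp [Hfun]
  · intro m n hmn
    rcases eq_or_ne m 0 with rfl | hm
    · simp [Hfun]
    rcases eq_or_ne n 0 with rfl | hn
    · simp [Hfun]
    simp only [Hfun, ArithmeticFunction.coe_mk]
    rw [Nat.totient_mul hmn]
    push_cast
    rw [div_mul_div_comm]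

theorem zeta_mul_Gfun : (↑(ζ : ArithmeticFunction ℕ) * Gfun) = Hfun := by
  rw [ArithmeticFunction.IsMultiplicative.eq_iff_eq_on_prime_powers _
      (isMultiplicative_zeta.natCast.mul Gfun_mult) _ Hfun_mult]
  intro p k hp
  rw [coe_zeta_mul_apply, Nat.sum_divisors_prime_pow hp]
  have hp1 : (1 : ℝ) ≤ p := by exact_mod_cast hp.one_lt.le
  have hpne : (p : ℝ) - 1 ≠ 0 := by
    have : (2:ℝ) ≤ p := by exact_mod_cast hp.two_le
    linarith
  have hterm : ∀ j, Gfun (p ^ j) =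
      (if j = 0 then (1:ℝ) else 0) + (if j = 1 then 1/((p:ℝ)-1) else 0) := by
    intro j
    match j with
    | 0 => simp [Gfun]
    | 1 =>
      rw [pow_one, Gfun_apply hp.pos.ne',
        ArithmeticFunction.moebius_apply_prime hp, Nat.totient_prime hp]
      rw [Nat.cast_sub hp.one_lt.le]
      push_cast
      norm_num
    | (j+2) =>
      rw [Gfun_apply (pow_ne_zero _ hp.pos.ne'),
        ArithmeticFunction.moebius_apply_prime_pow hp (by omega)]
      simp
  rw [Finset.sum_congr rfl (fun j _ => hterm j), Finset.sum_add_distrib]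
  rw [Finset.sum_ite_eq' (Finset.range (k+1)) 0 (fun _ => (1:ℝ)),
    Finset.sum_ite_eq' (Finset.range (k+1)) 1 (fun _ => 1/((p:ℝ)-1))]
  rcases Nat.eq_zero_or_pos k with rfl | hk
  · simp only [Hfun, ArithmeticFunction.coe_mk, pow_zero]
    norm_num
  · have h0 : (0:ℕ) ∈ Finset.range (k+1) := by simp
    have h1 : (1:ℕ) ∈ Finset.range (k+1) := by simp; omega
    rw [if_pos h0, if_pos h1]
    simp only [Hfun, ArithmeticFunction.coe_mk]
    rw [Nat.totient_prime_pow hp hk]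
    have hpk : p ^ k = p ^ (k-1) * p := by rw [← pow_succ]; congr 1; omega
    rw [hpk]
    push_cast [Nat.cast_sub hp.one_lt.le]
    have hppos : (0:ℝ) < (p:ℝ) ^ (k-1) := by positivity
    field_simp
    ring


theorem swap_sum (N : ℕ) (F : ℕ → ℝ) :
    ∑ n ∈ Icc 1 N, (∑ d ∈ n.divisors, F d) / n
      = ∑ d ∈ Icc 1 N, ∑ m ∈ Icc 1 (N / d), F d / (d * m) := by
  have hL : ∀ n ∈ Icc 1 N, (∑ d ∈ n.divisors, F d) / n = ∑ d ∈ n.divisors, F d / n :=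
    fun n _ => Finset.sum_div _ _ _
  rw [Finset.sum_congr rfl hL, Finset.sum_sigma', Finset.sum_sigma']
  refine Finset.sum_nbij' (fun x => ⟨x.2, x.1 / x.2⟩) (fun y => ⟨y.1 * y.2, y.1⟩)
    ?_ ?_ ?_ ?_ ?_
  · rintro ⟨n, d⟩ hx
    simp only [Finset.mem_sigma, Finset.mem_Icc, Nat.mem_divisors] at hx ⊢
    obtain ⟨⟨hn1, hnN⟩, hdvd, hn0⟩ := hx
    have hd1 : 1 ≤ d := Nat.pos_of_dvd_of_pos hdvd (by omega)
    have hdn : d ≤ n := Nat.le_of_dvd (by omega) hdvd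
    refine ⟨⟨hd1, hdn.trans hnN⟩, ?_, Nat.div_le_div_right hnN⟩
    rw [Nat.one_le_div_iff (by omega)]
    exact hdn
  · rintro ⟨d, m⟩ hy
    simp only [Finset.mem_sigma, Finset.mem_Icc, Nat.mem_divisors] at hy ⊢
    obtain ⟨⟨hd1, hdN⟩, hm1, hmN⟩ := hy
    refine ⟨⟨by nlinarith, ?_⟩, ⟨m, rfl⟩, by positivity⟩
    calc d * m ≤ d * (N / d) := Nat.mul_le_mul_left _ hmN
      _ = N / d * d := mul_comm _ _
      _ ≤ N := Nat.div_mul_le_self N d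
  · rintro ⟨n, d⟩ hx
    simp only [Finset.mem_sigma, Finset.mem_Icc, Nat.mem_divisors] at hx
    obtain ⟨⟨hn1, hnN⟩, hdvd, hn0⟩ := hx
    have : d * (n / d) = n := Nat.mul_div_cancel' hdvd
    simp [this]
  · rintro ⟨d, m⟩ hy
    simp only [Finset.mem_sigma, Finset.mem_Icc] at hy
    have hd1 : 1 ≤ d := hy.1.1
    have : d * m / d = m := Nat.mul_div_cancel_left _ (by omega)
    simp [this]
  · rintro ⟨n, d⟩ hx
    simp only [Finset.mem_sigma, Finset.mem_Icc, Nat.mem_divisors] at hx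
    obtain ⟨⟨hn1, hnN⟩, hdvd, hn0⟩ := hx
    have h : d * (n / d) = n := Nat.mul_div_cancel' hdvd
    show F d / (n:ℝ) = F d / ((d:ℝ) * (n / d : ℕ))
    rw [← Nat.cast_mul, h]


noncomputable def gg : ℕ → ℝ := fun d => (μ d : ℝ)^2 / (Nat.totient d * d)

theorem gg_nonneg (d : ℕ) : 0 ≤ gg d := by
  unfold gg; positivity

theorem gg_zero : gg 0 = 0 := by simp [gg]

theorem gg_one : gg 1 = 1 := by simp [gg]

theorem moebius_sq_le_one (d : ℕ) : (μ d : ℝ)^2 ≤ 1 := by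
  by_cases h : Squarefree d
  · rw [ArithmeticFunction.moebius_apply_of_squarefree h]
    push_cast
    rw [← pow_mul, mul_comm, pow_mul]
    norm_num
  · rw [ArithmeticFunction.moebius_eq_zero_of_not_squarefree h]
    norm_num

theorem gg_le (d : ℕ) (hd : 1 ≤ d) : gg d ≤ 2 / (d:ℝ)^((3:ℝ)/2) := by
  have hφ : 0 < d.totient := Nat.totient_pos.mpr (by omega)
  have hφR : (0:ℝ) < d.totient := by exact_mod_cast hφ
  have hdR : (0:ℝ) < d := by exact_mod_cast hd
  have hsq : (d:ℝ) ≤ 2 * (d.totient:ℝ)^2 := by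
    exact_mod_cast le_two_mul_totient_sq d hd
  have hsqrt : Real.sqrt d ≤ 2 * d.totient := by
    calc Real.sqrt d ≤ Real.sqrt ((2 * d.totient:ℝ)^2) := by
          apply Real.sqrt_le_sqrt; nlinarith
      _ = 2 * d.totient := Real.sqrt_sq (by positivity)
  have hkey : (d:ℝ)^((3:ℝ)/2) ≤ 2 * ((d.totient:ℝ) * d) := by
    have : (d:ℝ)^((3:ℝ)/2) = d * Real.sqrt d := by
      rw [Real.sqrt_eq_rpow, ← Real.rpow_one_add' (le_of_lt hdR) (by norm_num)]
      norm_num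
    rw [this]
    calc (d:ℝ) * Real.sqrt d ≤ d * (2 * d.totient) := by
          apply mul_le_mul_of_nonneg_left hsqrt (le_of_lt hdR)
      _ = 2 * ((d.totient:ℝ) * d) := by ring
  calc gg d ≤ 1 / ((d.totient:ℝ) * d) := by
        unfold gg
        gcongr
        exact moebius_sq_le_one d
    _ ≤ 2 / (d:ℝ)^((3:ℝ)/2) := by
        rw [div_le_div_iff₀ (by positivity) (by positivity)]
        linarith

theorem summable_gg : Summable gg := by
  have hs : Summable (fun d : ℕ => 2 / (d:ℝ)^((3:ℝ)/2)) := by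
    have := (Real.summable_one_div_nat_rpow (p := (3:ℝ)/2)).mpr (by norm_num)
    simpa [div_eq_mul_inv, mul_comm] using this.mul_left 2
  apply Summable.of_nonneg_of_le gg_nonneg (fun d => ?_) hs
  rcases Nat.eq_zero_or_pos d with rfl | hd
  · simp [gg_zero]
  · exact gg_le d hd

theorem log_nat_le (d : ℕ) : Real.log d ≤ (d:ℝ)^((1:ℝ)/4) * 4 := by
  have := Real.log_le_rpow_div (x := (d:ℝ)) (ε := 1/4) (Nat.cast_nonneg d) (by norm_num)
  calc Real.log d ≤ (d:ℝ)^((1:ℝ)/4) / (1/4) := this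
    _ = (d:ℝ)^((1:ℝ)/4) * 4 := by ring

theorem summable_gglog : Summable (fun d : ℕ => gg d * Real.log d) := by
  have hs : Summable (fun d : ℕ => 8 / (d:ℝ)^((5:ℝ)/4)) := by
    have := (Real.summable_one_div_nat_rpow (p := (5:ℝ)/4)).mpr (by norm_num)
    simpa [div_eq_mul_inv, mul_comm] using this.mul_left 8
  apply Summable.of_nonneg_of_le
    (fun d => mul_nonneg (gg_nonneg d) (Real.log_natCast_nonneg d)) (fun d => ?_) hs
  rcases Nat.eq_zero_or_pos d with rfl | hd
  · simp [gg_zero]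
  · have hdR : (0:ℝ) < d := by exact_mod_cast hd
    have h1 : gg d * Real.log d ≤ (2 / (d:ℝ)^((3:ℝ)/2)) * ((d:ℝ)^((1:ℝ)/4) * 4) := by
      apply mul_le_mul (gg_le d hd) (log_nat_le d) (Real.log_natCast_nonneg d) (by positivity)
    refine h1.trans (le_of_eq ?_)
    have hsplit : (d:ℝ)^((3:ℝ)/2) = (d:ℝ)^((5:ℝ)/4) * (d:ℝ)^((1:ℝ)/4) := by
      rw [← Real.rpow_add hdR]; norm_num
    rw [hsplit]
    have h4 : (d:ℝ)^((1:ℝ)/4) ≠ 0 := by positivity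
    have h5 : (d:ℝ)^((5:ℝ)/4) ≠ 0 := by positivity
    field_simp
    ring

noncomputable def hsum : ℕ → ℝ := fun M => ∑ m ∈ Icc 1 M, (1:ℝ)/m

theorem hsum_eq (M : ℕ) : hsum M = (harmonic M : ℝ) := by
  rw [harmonic_eq_sum_Icc]
  push_cast
  simp [hsum, one_div]

theorem hsum_lower (M : ℕ) : Real.log M ≤ hsum M := by
  rw [hsum_eq]
  refine le_trans ?_ (log_add_one_le_harmonic M)
  rcases Nat.eq_zero_or_pos M with rfl | hM
  · norm_num
  · apply Real.log_le_log (by exact_mod_cast hM)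
    exact_mod_cast Nat.le_succ M

theorem hsum_upper (M : ℕ) : hsum M ≤ 1 + Real.log M := by
  rw [hsum_eq]; exact harmonic_le_one_add_log M

theorem hd_est (N d : ℕ) (h1 : 1 ≤ d) (h2 : d ≤ N) :
    |hsum (N/d) - (Real.log N - Real.log d)| ≤ 1 := by
  have hdR : (0:ℝ) < d := by exact_mod_cast h1
  have hNR : (0:ℝ) < N := by have : (1:ℕ) ≤ N := h1.trans h2; exact_mod_cast this
  have hM1 : 1 ≤ N / d := (Nat.one_le_div_iff (by omega)).mpr h2
  have hMR : (0:ℝ) < (N/d : ℕ) := by exact_mod_cast hM1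
  have hlogdiv : Real.log ((N:ℝ)/d) = Real.log N - Real.log d :=
    Real.log_div (by positivity) (by positivity)
  rw [abs_le]
  constructor
  · -- lower : log N - log d ≤ hsum (N/d)
    have hle : (N:ℝ)/d ≤ (N/d : ℕ) + 1 := by
      rw [div_le_iff₀ hdR]
      have : N < (N/d + 1) * d := by
        have := Nat.div_add_mod N d
        have := Nat.mod_lt N (show 0 < d by omega)
        nlinarith [Nat.div_add_mod N d]
      calc (N:ℝ) ≤ ((N/d + 1) * d : ℕ) := by exact_mod_cast this.le
        _ = ((N/d:ℕ) + 1) * (d:ℝ) := by push_cast; ring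
    have : Real.log N - Real.log d ≤ Real.log ((N/d : ℕ) + 1) := by
      rw [← hlogdiv]
      apply Real.log_le_log (by positivity) hle
    have h3 : Real.log ((N/d : ℕ) + 1) ≤ hsum (N/d) := by
      rw [hsum_eq]
      have := log_add_one_le_harmonic (N/d)
      calc Real.log ((N/d:ℕ) + 1) = Real.log ((N/d + 1 : ℕ)) := by push_cast; ring_nf
        _ ≤ _ := this
    linarith
  · -- upper: hsum (N/d) ≤ 1 + log N - log d
    have hle : ((N/d : ℕ) : ℝ) ≤ (N:ℝ)/d := by
      rw [le_div_iff₀ hdR]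
      calc ((N/d:ℕ):ℝ) * d = ((N/d * d : ℕ) : ℝ) := by push_cast; ring
        _ ≤ N := by exact_mod_cast Nat.div_mul_le_self N d
    have := hsum_upper (N/d)
    have h4 : Real.log ((N/d : ℕ)) ≤ Real.log N - Real.log d := by
      rw [← hlogdiv]
      exact Real.log_le_log hMR hle
    linarith

theorem S_eq (N : ℕ) :
    ∑ n ∈ Icc 1 N, (1:ℝ)/(Nat.totient n)
      = ∑ d ∈ Icc 1 N, gg d * hsum (N/d) := by
  have step1 : ∀ n ∈ Icc 1 N, (1:ℝ)/(Nat.totient n)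
      = (∑ d ∈ n.divisors, (μ d : ℝ)^2 / (Nat.totient d)) / n := by
    intro n hn
    rw [Finset.mem_Icc] at hn
    have hn0 : n ≠ 0 := by omega
    have hz : (↑(ζ : ArithmeticFunction ℕ) * Gfun) n = Hfun n := by rw [zeta_mul_Gfun]
    rw [coe_zeta_mul_apply] at hz
    have hsum_eq' : ∑ d ∈ n.divisors, Gfun d
        = ∑ d ∈ n.divisors, (μ d : ℝ)^2 / (Nat.totient d) := by
      apply Finset.sum_congr rfl
      intro d hd
      exact Gfun_apply (Nat.pos_of_mem_divisors hd).ne'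
    rw [hsum_eq'] at hz
    rw [hz]
    simp only [Hfun, ArithmeticFunction.coe_mk]
    have hnR : (0:ℝ) < n := by exact_mod_cast Nat.pos_of_ne_zero hn0
    have hφ : (0:ℝ) < (n.totient : ℝ) := by
      exact_mod_cast Nat.totient_pos.mpr (Nat.pos_of_ne_zero hn0)
    field_simp
  rw [Finset.sum_congr rfl step1,
    swap_sum N (fun d => (μ d : ℝ)^2 / (Nat.totient d))]
  apply Finset.sum_congr rfl
  intro d hd
  rw [Finset.mem_Icc] at hd
  unfold hsum gg
  rw [Finset.mul_sum]
  apply Finset.sum_congr rfl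
  intro m hm
  rw [Finset.mem_Icc] at hm
  rw [div_div, div_mul_div_comm, mul_one, mul_assoc]

noncomputable def AA : ℝ := ∑' d, gg d
noncomputable def CC : ℝ := ∑' d, gg d * Real.log d

theorem AA_ge_one : 1 ≤ AA := by
  have := Summable.le_tsum summable_gg 1 (fun j _ => gg_nonneg j)
  rwa [gg_one] at this

theorem CC_nonneg : 0 ≤ CC :=
  tsum_nonneg (fun d => mul_nonneg (gg_nonneg d) (Real.log_natCast_nonneg d))

theorem partial_le_AA (s : Finset ℕ) : ∑ d ∈ s, gg d ≤ AA :=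
  Summable.sum_le_tsum s (fun i _ => gg_nonneg i) summable_gg

theorem partial_le_CC (s : Finset ℕ) : ∑ d ∈ s, gg d * Real.log d ≤ CC :=
  Summable.sum_le_tsum s (fun i _ => mul_nonneg (gg_nonneg i) (Real.log_natCast_nonneg i)) summable_gglog

set_option maxHeartbeats 1000000 in
theorem tail_bound (N : ℕ) (hN : 1 ≤ N) :
    (AA - ∑ d ∈ Icc 1 N, gg d) * Real.log N ≤ CC := by
  have hIcc : ∑ d ∈ Icc 1 N, gg d = ∑ d ∈ Finset.range (N+1), gg d := by
    apply Finset.sum_subset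
    · intro x hx
      rw [Finset.mem_Icc] at hx
      rw [Finset.mem_range]; omega
    · intro x hx hnx
      rw [Finset.mem_range] at hx
      rw [Finset.mem_Icc] at hnx
      have : x = 0 := by omega
      subst this; exact gg_zero
  have htail := Summable.sum_add_tsum_nat_add (f := gg) (N+1) summable_gg
  have hT : AA - ∑ d ∈ Icc 1 N, gg d = ∑' i, gg (i + (N+1)) := by
    rw [hIcc]; unfold AA; linarith
  rw [hT]
  have hsum1 : Summable (fun i => gg (i + (N+1))) :=
    (summable_nat_add_iff (N+1)).mpr summable_gg
  have hsum2 : Summable (fun i => gg (i + (N+1)) * Real.log ((i + (N+1) : ℕ))) :=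
    (summable_nat_add_iff (N+1)).mpr summable_gglog
  have hNR : (1:ℝ) ≤ N := by exact_mod_cast hN
  calc (∑' i, gg (i + (N+1))) * Real.log N
      = ∑' i, gg (i + (N+1)) * Real.log N := tsum_mul_right.symm
    _ ≤ ∑' i, gg (i + (N+1)) * Real.log ((i + (N+1) : ℕ)) := by
        apply Summable.tsum_le_tsum _ (hsum1.mul_right _) hsum2
        intro i
        apply mul_le_mul_of_nonneg_left _ (gg_nonneg _)
        apply Real.log_le_log (by linarith)
        exact_mod_cast Nat.le_add_left N (i+1) |>.trans_eq (by omega)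
    _ ≤ CC := by
        have heq := Summable.sum_add_tsum_nat_add (f := fun d => gg d * Real.log d) (N+1) summable_gglog
        have hpos : 0 ≤ ∑ i ∈ Finset.range (N+1), gg i * Real.log i :=
          Finset.sum_nonneg (fun i _ => mul_nonneg (gg_nonneg i) (Real.log_natCast_nonneg i))
        unfold CC; linarith

theorem main_nat (N : ℕ) (hN : 1 ≤ N) :
    |(∑ n ∈ Icc 1 N, (1:ℝ)/(Nat.totient n)) - AA * Real.log N| ≤ AA + 2 * CC := by
  rw [S_eq]
  have hsplit : ∀ d ∈ Icc 1 N, gg d * hsum (N/d)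
      = gg d * (hsum (N/d) - (Real.log N - Real.log d))
        + gg d * Real.log N - gg d * Real.log d := by intro d _; ring
  rw [Finset.sum_congr rfl hsplit, Finset.sum_sub_distrib, Finset.sum_add_distrib,
    ← Finset.sum_mul]
  set E1 := ∑ d ∈ Icc 1 N, gg d * (hsum (N/d) - (Real.log N - Real.log d)) with hE1
  set P := ∑ d ∈ Icc 1 N, gg d with hP
  set E2 := ∑ d ∈ Icc 1 N, gg d * Real.log d with hE2
  have h1 : |E1| ≤ AA := by
    calc |E1| ≤ ∑ d ∈ Icc 1 N, |gg d * (hsum (N/d) - (Real.log N - Real.log d))| :=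
          Finset.abs_sum_le_sum_abs _ _
      _ ≤ ∑ d ∈ Icc 1 N, gg d := by
          apply Finset.sum_le_sum
          intro d hd
          rw [Finset.mem_Icc] at hd
          rw [abs_mul, abs_of_nonneg (gg_nonneg d)]
          calc gg d * |hsum (N/d) - (Real.log N - Real.log d)|
              ≤ gg d * 1 := mul_le_mul_of_nonneg_left (hd_est N d hd.1 hd.2) (gg_nonneg d)
            _ = gg d := mul_one _
      _ ≤ AA := partial_le_AA _
  have h2a : 0 ≤ E2 :=
    Finset.sum_nonneg (fun i _ => mul_nonneg (gg_nonneg i) (Real.log_natCast_nonneg i))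
  have h2b : E2 ≤ CC := partial_le_CC _
  have h3a : 0 ≤ (AA - P) * Real.log N :=
    mul_nonneg (by linarith [partial_le_AA (Icc 1 N)]) (Real.log_natCast_nonneg N)
  have h3b : (AA - P) * Real.log N ≤ CC := tail_bound N hN
  rw [abs_le] at h1 ⊢
  constructor <;> nlinarith [h1.1, h1.2]

theorem sum_one_div_totient_asymptotic :
    ∃ D > (0 : ℝ), ∃ c : ℝ, ∀ t : ℝ, 1 ≤ t →
      |(∑ n ∈ Finset.Icc 1 ⌊t⌋₊, (1 : ℝ) / (Nat.totient n)) - D * Real.log t| ≤ c := by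
  have hA1 : 1 ≤ AA := AA_ge_one
  refine ⟨AA, by linarith, 2 * AA + 2 * CC, ?_⟩
  intro t ht
  set N := ⌊t⌋₊ with hNdef
  have hN1 : 1 ≤ N := Nat.le_floor (by exact_mod_cast ht)
  have h1 := main_nat N hN1
  have hNt : (N:ℝ) ≤ t := Nat.floor_le (by linarith)
  have htN : t < N + 1 := Nat.lt_floor_add_one t
  have hNR : (1:ℝ) ≤ N := by exact_mod_cast hN1
  have hlog1 : Real.log N ≤ Real.log t := Real.log_le_log (by linarith) hNt
  have hlog2 : Real.log t ≤ Real.log N + 1 := by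
    have h2N : t ≤ 2*N := by linarith
    calc Real.log t ≤ Real.log (2*N) := Real.log_le_log (by linarith) h2N
      _ = Real.log 2 + Real.log N := Real.log_mul (by norm_num) (by linarith)
      _ ≤ Real.log N + 1 := by
          have := Real.log_two_lt_d9; linarith
  rw [abs_le] at h1 ⊢
  have hC := CC_nonneg
  constructor <;> nlinarith [h1.1, h1.2]
end

section
/- For y ≥ 1, one has Σ_{n > y} 1/φ(n)² = O(1/y), i.e., there is an absolute constant c with Σ_{n > y} 1/φ(n)² ≤ c/y for all y ≥ 1. -/
open Finset


lemma sumIco_le (k K : ℕ) (hk : 1 ≤ k) (hK : k ≤ K) :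
    ∑ m ∈ Finset.Ico k K, 1/(m:ℝ)^2 ≤ 2/(k:ℝ) - 2/(K:ℝ) := by
  induction K, hK using Nat.le_induction with
  | base => simp
  | succ K hK ih =>
    rw [Finset.sum_Ico_succ_top hK]
    have hK0 : (0:ℝ) < K := by
      have : 0 < K := lt_of_lt_of_le hk hK
      exact_mod_cast this
    have key : 1/(K:ℝ)^2 ≤ 2/(K:ℝ) - 2/((K:ℝ)+1) := by
      rw [div_sub_div _ _ (ne_of_gt hK0) (by positivity), div_le_div_iff₀ (by positivity) (by positivity)]
      have hK1 : (1:ℝ) ≤ K := by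
        have : 1 ≤ K := le_trans hk hK
        exact_mod_cast this
      nlinarith [hK0, hK1]
    push_cast
    linarith [ih]

lemma tail_sq (t : ℝ) (ht : 0 < t) (N : ℕ) :
    ∑ m ∈ Finset.range N, (if t < (m:ℝ) then 1/(m:ℝ)^2 else 0) ≤ 2/t := by
  set k := Nat.floor t + 1 with hkdef
  have hk1 : 1 ≤ k := Nat.le_add_left 1 _
  have htk : t < (k:ℝ) := by
    push_cast
    exact (show t < ((⌊t⌋₊ + 1 : ℕ) : ℝ) by push_cast; exact Nat.lt_floor_add_one t)
  have hsub : (Finset.range N).filter (fun m : ℕ => t < (m:ℝ)) ⊆ Finset.Ico k N := by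
    intro m hm
    simp only [Finset.mem_filter, Finset.mem_range] at hm
    rw [Finset.mem_Ico]
    refine ⟨?_, hm.1⟩
    have := (Nat.floor_lt ht.le).mpr hm.2
    omega
  have h2k : 2/(k:ℝ) ≤ 2/t := by
    apply div_le_div_of_nonneg_left (by norm_num) ht htk.le
  rw [← Finset.sum_filter]
  calc ∑ m ∈ (Finset.range N).filter (fun m : ℕ => t < (m:ℝ)), 1/(m:ℝ)^2
      ≤ ∑ m ∈ Finset.Ico k N, 1/(m:ℝ)^2 := by
        apply Finset.sum_le_sum_of_subset_of_nonneg hsub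
        intro m _ _; positivity
    _ ≤ 2/t := by
        by_cases hkN : k ≤ N
        · have h1 := sumIco_le k N hk1 hkN
          have hN0 : (0:ℝ) ≤ 2/(N:ℝ) := by positivity
          linarith
        · rw [Finset.Ico_eq_empty (by omega)]
          simp only [Finset.sum_empty]
          positivity

lemma small_cases : ∀ u ∈ ({2,3,5,7} : Finset ℕ).powerset,
    1296^u.card ≤ 331776 * (∏ p ∈ u, p)^3 := by decide

lemma nat_bound (t : Finset ℕ) (ht : ∀ p ∈ t, p.Prime) :
    1296^t.card ≤ 331776 * (∏ p ∈ t, p)^3 := by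
  classical
  set t₁ := t.filter (fun p => p ≤ 7) with ht1
  set t₂ := t.filter (fun p => ¬ p ≤ 7) with ht2
  have hcard : t₁.card + t₂.card = t.card := Finset.card_filter_add_card_filter_not _
  have hprod : (∏ p ∈ t₁, p) * (∏ p ∈ t₂, p) = ∏ p ∈ t, p :=
    Finset.prod_filter_mul_prod_filter_not t _ _
  have h1 : 1296^t₁.card ≤ 331776 * (∏ p ∈ t₁, p)^3 := by
    apply small_cases
    rw [Finset.mem_powerset]
    intro p hp
    rw [ht1, Finset.mem_filter] at hp
    have hpp := ht p hp.1
    have h2 := hpp.two_le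
    have h7 := hp.2
    interval_cases p <;> first | decide | exact absurd hpp (by decide)
  have h2 : 1296^t₂.card ≤ (∏ p ∈ t₂, p)^3 := by
    rw [← Finset.prod_pow, ← Finset.prod_const]
    apply Finset.prod_le_prod'
    intro p hp
    rw [ht2, Finset.mem_filter] at hp
    have hpp := ht p hp.1
    have h8 : 7 < p := by omega
    have h11 : 11 ≤ p := by
      by_contra h
      push_neg at h
      interval_cases p <;> exact absurd hpp (by decide)
    calc (1296:ℕ) ≤ 11^3 := by norm_num
      _ ≤ p^3 := Nat.pow_le_pow_left h11 3
  calc 1296^t.card = 1296^t₁.card * 1296^t₂.card := by rw [← hcard, pow_add]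
    _ ≤ (331776 * (∏ p ∈ t₁, p)^3) * (∏ p ∈ t₂, p)^3 := Nat.mul_le_mul h1 h2
    _ = 331776 * (∏ p ∈ t, p)^3 := by rw [← hprod]; ring

lemma real_bound (t : Finset ℕ) (ht : ∀ p ∈ t, p.Prime) :
    ∏ p ∈ t, (6/(p:ℝ)) ≤ 24 / ((∏ p ∈ t, p : ℕ):ℝ)^((1:ℝ)/4) := by
  set q : ℕ := ∏ p ∈ t, p with hq
  have hq1 : 1 ≤ q := by
    rw [hq]
    exact Finset.one_le_prod' fun p hp => (ht p hp).one_lt.le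
  have hqR : (1:ℝ) ≤ (q:ℝ) := by exact_mod_cast hq1
  have hq0 : (0:ℝ) < (q:ℝ) := by linarith
  have hkey : (6:ℝ)^t.card ≤ 24 * (q:ℝ)^((3:ℝ)/4) := by
    have h4 : ((6:ℝ)^t.card)^(4:ℕ) ≤ (24 * (q:ℝ)^((3:ℝ)/4))^(4:ℕ) := by
      have hnat := nat_bound t ht
      have hcast : ((1296:ℝ))^t.card ≤ 331776 * (q:ℝ)^(3:ℕ) := by exact_mod_cast hnat
      calc ((6:ℝ)^t.card)^(4:ℕ) = (1296:ℝ)^t.card := by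
            rw [← pow_mul, mul_comm, pow_mul]; norm_num
        _ ≤ 331776 * (q:ℝ)^(3:ℕ) := hcast
        _ = (24 * (q:ℝ)^((3:ℝ)/4))^(4:ℕ) := by
            rw [mul_pow, ← Real.rpow_natCast ((q:ℝ)^((3:ℝ)/4)) 4, ← Real.rpow_mul hq0.le,
              ← Real.rpow_natCast (q:ℝ) 3]
            norm_num
    exact le_of_pow_le_pow_left₀ (by norm_num) (by positivity) h4
  have hprodform : ∏ p ∈ t, (6/(p:ℝ)) = (6:ℝ)^t.card / (q:ℝ) := by
    rw [Finset.prod_div_distrib, Finset.prod_const, hq]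
    push_cast
    ring
  rw [hprodform]
  rw [div_le_div_iff₀ hq0 (by positivity)]
  calc (6:ℝ)^t.card * (q:ℝ)^((1:ℝ)/4) ≤ (24 * (q:ℝ)^((3:ℝ)/4)) * (q:ℝ)^((1:ℝ)/4) := by
        apply mul_le_mul_of_nonneg_right hkey (by positivity)
    _ = 24 * (q:ℝ) := by
        rw [mul_assoc, ← Real.rpow_add hq0]
        norm_num

lemma totient_sq_bound (n : ℕ) (hn : 1 ≤ n) :
    1/((Nat.totient n : ℝ))^2 ≤
      (1/(n:ℝ)^2) * ∑ t ∈ n.primeFactors.powerset, ∏ p ∈ t, (6/(p:ℝ)) := by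
  have hφ : 0 < Nat.totient n := Nat.totient_pos.mpr hn
  have hφR : (0:ℝ) < (Nat.totient n : ℝ) := by exact_mod_cast hφ
  have hnR : (0:ℝ) < (n:ℝ) := by exact_mod_cast hn
  have hid : (Nat.totient n : ℝ) * ∏ p ∈ n.primeFactors, (p:ℝ)
      = (n:ℝ) * ∏ p ∈ n.primeFactors, ((p:ℝ) - 1) := by
    have h := Nat.totient_mul_prod_primeFactors n
    have h' : ((Nat.totient n * ∏ p ∈ n.primeFactors, p : ℕ) : ℝ)
        = ((n * ∏ p ∈ n.primeFactors, (p-1) : ℕ) : ℝ) := by exact_mod_cast h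
    push_cast at h'
    rw [h']
    congr 1
    apply Finset.prod_congr rfl
    intro p hp
    have h2 := (Nat.prime_of_mem_primeFactors hp).two_le
    push_cast [Nat.cast_sub (by omega : 1 ≤ p)]
    ring
  have hB0 : (0:ℝ) < ∏ p ∈ n.primeFactors, ((p:ℝ) - 1) := by
    apply Finset.prod_pos
    intro p hp
    have h2 := (Nat.prime_of_mem_primeFactors hp).two_le
    have : (2:ℝ) ≤ (p:ℝ) := by exact_mod_cast h2
    linarith
  have hsq : (n:ℝ)^2 = (Nat.totient n : ℝ)^2 * ∏ p ∈ n.primeFactors, ((p:ℝ)/((p:ℝ)-1))^2 := by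
    have expand : ∏ p ∈ n.primeFactors, ((p:ℝ)/((p:ℝ)-1))^2
        = (∏ p ∈ n.primeFactors, (p:ℝ))^2 / (∏ p ∈ n.primeFactors, ((p:ℝ)-1))^2 := by
      simp only [div_pow]
      rw [Finset.prod_div_distrib, Finset.prod_pow, Finset.prod_pow]
    rw [expand, ← mul_div_assoc, eq_div_iff (by positivity)]
    have h2 := congrArg (fun x : ℝ => x^2) hid
    linear_combination -h2
  have hfac : ∏ p ∈ n.primeFactors, ((p:ℝ)/((p:ℝ)-1))^2
      ≤ ∏ p ∈ n.primeFactors, (1 + 6/(p:ℝ)) := by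
    apply Finset.prod_le_prod
    · intro p hp; positivity
    · intro p hp
      have h2 : (2:ℝ) ≤ (p:ℝ) := by exact_mod_cast (Nat.prime_of_mem_primeFactors hp).two_le
      have hp0 : (0:ℝ) < (p:ℝ) := by linarith
      have h1 : (0:ℝ) < ((p:ℝ)-1)^2 := by nlinarith
      rw [div_pow, div_le_iff₀ h1]
      have hrepl : 1 + 6/(p:ℝ) = ((p:ℝ)+6)/(p:ℝ) := by field_simp
      rw [hrepl, div_mul_eq_mul_div, le_div_iff₀ hp0]
      nlinarith
  have hexp : ∏ p ∈ n.primeFactors, (1 + 6/(p:ℝ))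
      = ∑ t ∈ n.primeFactors.powerset, ∏ p ∈ t, (6/(p:ℝ)) := by
    have h := Finset.prod_add (fun p : ℕ => (6:ℝ)/(p:ℝ)) (fun _ : ℕ => (1:ℝ)) n.primeFactors
    simp only [Finset.prod_const_one, mul_one] at h
    rw [← h]
    apply Finset.prod_congr rfl
    intro p hp
    ring
  have hSn : (n:ℝ)^2 ≤ (∑ t ∈ n.primeFactors.powerset, ∏ p ∈ t, (6/(p:ℝ))) * (Nat.totient n:ℝ)^2 := by
    calc (n:ℝ)^2 = (Nat.totient n : ℝ)^2 * ∏ p ∈ n.primeFactors, ((p:ℝ)/((p:ℝ)-1))^2 := hsq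
      _ ≤ (Nat.totient n : ℝ)^2 * ∑ t ∈ n.primeFactors.powerset, ∏ p ∈ t, (6/(p:ℝ)) := by
          apply mul_le_mul_of_nonneg_left _ (by positivity)
          rw [← hexp]; exact hfac
      _ = _ := by ring
  rw [div_le_iff₀ (by positivity)]
  have hrw : (1/(n:ℝ)^2 * ∑ t ∈ n.primeFactors.powerset, ∏ p ∈ t, (6/(p:ℝ))) * (Nat.totient n:ℝ)^2
      = ((∑ t ∈ n.primeFactors.powerset, ∏ p ∈ t, (6/(p:ℝ))) * (Nat.totient n:ℝ)^2)/(n:ℝ)^2 := by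
    ring
  rw [hrw, le_div_iff₀ (by positivity), one_mul]
  exact hSn

theorem tail_sum_one_div_totient_sq :
    ∃ c : ℝ, ∀ y : ℝ, 1 ≤ y →
      (∑' n : ℕ, if y < (n : ℝ) then (1 : ℝ) / (Nat.totient n) ^ 2 else 0) ≤ c / y := by
  classical
  have hZsum : Summable (fun d : ℕ => 1/(d:ℝ)^((5:ℝ)/4)) :=
    Real.summable_one_div_nat_rpow.mpr (by norm_num)
  set Z : ℝ := ∑' d : ℕ, 1/(d:ℝ)^((5:ℝ)/4) with hZdef
  have hZ0 : 0 ≤ Z := tsum_nonneg (fun d => by positivity)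
  refine ⟨48*Z, ?_⟩
  intro y hy
  have hy0 : (0:ℝ) < y := lt_of_lt_of_le one_pos hy
  apply tsum_le_of_sum_le' (by positivity)
  intro s
  rw [← Finset.sum_filter]
  set s' := s.filter (fun n : ℕ => y < (n:ℝ)) with hs'
  have hn1 : ∀ n ∈ s', 1 ≤ n := by
    intro n hn
    rw [hs', Finset.mem_filter] at hn
    have h1 : (1:ℝ) < (n:ℝ) := lt_of_le_of_lt hy hn.2
    exact_mod_cast h1.le
  have hygt : ∀ n ∈ s', y < (n:ℝ) := by
    intro n hn
    rw [hs', Finset.mem_filter] at hn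
    exact hn.2
  set M := s'.sup id with hM
  set h : ℕ × ℕ → ℝ := fun q =>
    if y < (q.1:ℝ)*(q.2:ℝ) then 24/((q.1:ℝ)^((1:ℝ)/4) * (q.1:ℝ)^2 * (q.2:ℝ)^2) else 0
    with hh
  have hh0 : ∀ q : ℕ × ℕ, 0 ≤ h q := by
    intro q; rw [hh]; dsimp only
    split
    · positivity
    · exact le_refl 0
  set S := s'.sigma (fun n => n.primeFactors.powerset) with hS
  set e : (Σ _ : ℕ, Finset ℕ) → ℕ × ℕ :=
    fun x => (∏ p ∈ x.2, p, x.1 / ∏ p ∈ x.2, p) with he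
  -- basic facts about elements of S
  have hfacts : ∀ x ∈ S, (∀ p ∈ x.2, p.Prime) ∧ (∏ p ∈ x.2, p) ∣ x.1 ∧ 1 ≤ x.1 := by
    intro x hx
    rw [hS, Finset.mem_sigma] at hx
    obtain ⟨hx1, hx2⟩ := hx
    rw [Finset.mem_powerset] at hx2
    refine ⟨fun p hp => Nat.prime_of_mem_primeFactors (hx2 hp), ?_, hn1 _ hx1⟩
    calc (∏ p ∈ x.2, p) ∣ ∏ p ∈ x.1.primeFactors, p :=
          Finset.prod_dvd_prod_of_subset _ _ _ hx2
      _ ∣ x.1 := Nat.prod_primeFactors_dvd x.1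
  -- injectivity of e on S
  have hinj : ∀ x ∈ S, ∀ x' ∈ S, e x = e x' → x = x' := by
    intro x hx x' hx' hexx
    obtain ⟨hp, hdvd, hx1⟩ := hfacts x hx
    obtain ⟨hp', hdvd', hx1'⟩ := hfacts x' hx'
    rw [he] at hexx
    dsimp only at hexx
    have h1 : (∏ p ∈ x.2, p) = ∏ p ∈ x'.2, p := (Prod.mk.injEq _ _ _ _ ▸ hexx).1
    have h2 : x.1 / (∏ p ∈ x.2, p) = x'.1 / (∏ p ∈ x'.2, p) := (Prod.mk.injEq _ _ _ _ ▸ hexx).2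
    have ht : x.2 = x'.2 := by
      have := congrArg Nat.primeFactors h1
      rwa [Nat.primeFactors_prod hp, Nat.primeFactors_prod hp'] at this
    have hn : x.1 = x'.1 := by
      have e1 := Nat.div_mul_cancel hdvd
      have e2 := Nat.div_mul_cancel hdvd'
      rw [← e1, ← e2, h2, h1]
    obtain ⟨a, b⟩ := x
    obtain ⟨a', b'⟩ := x'
    simp only at ht hn
    subst ht; subst hn; rfl
  -- image of S is inside the box
  have himg : S.image e ⊆ Finset.range (M+1) ×ˢ Finset.range (M+1) := by
    intro q hq
    rw [Finset.mem_image] at hq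
    obtain ⟨x, hx, rfl⟩ := hq
    obtain ⟨hp, hdvd, hx1⟩ := hfacts x hx
    have hxs' : x.1 ∈ s' := by
      rw [hS, Finset.mem_sigma] at hx; exact hx.1
    have hxM : x.1 ≤ M := Finset.le_sup (f := id) hxs'
    have hd : (∏ p ∈ x.2, p) ≤ x.1 := Nat.le_of_dvd hx1 hdvd
    have hm : x.1 / (∏ p ∈ x.2, p) ≤ x.1 := Nat.div_le_self _ _
    rw [he, Finset.mem_product]
    constructor <;> rw [Finset.mem_range] <;> dsimp only <;> omega
  -- pointwise bound
  have hpt : ∀ x ∈ S, (1/((x.1:ℕ):ℝ)^2) * ∏ p ∈ x.2, (6/(p:ℝ)) ≤ h (e x) := by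
    intro x hx
    obtain ⟨hp, hdvd, hx1⟩ := hfacts x hx
    have hxs' : x.1 ∈ s' := by
      rw [hS, Finset.mem_sigma] at hx; exact hx.1
    set d := ∏ p ∈ x.2, p with hd
    set m := x.1 / d with hm
    have hd1 : 1 ≤ d := Finset.one_le_prod' fun p hp' => (hp p hp').one_lt.le
    have hnm : x.1 = d * m := (Nat.mul_div_cancel' hdvd).symm
    have hcond : y < (d:ℝ)*(m:ℝ) := by
      have := hygt _ hxs'
      rw [hnm] at this
      push_cast at this
      exact this
    rw [hh, he]
    dsimp only
    rw [if_pos hcond]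
    have hdR : (0:ℝ) < (d:ℝ) := by exact_mod_cast hd1
    have hmn : ((d:ℝ)^2 * (m:ℝ)^2) = ((x.1:ℕ):ℝ)^2 := by
      rw [hnm]; push_cast; ring
    have hrb := real_bound x.2 hp
    rw [← hd] at hrb
    calc (1/((x.1:ℕ):ℝ)^2) * ∏ p ∈ x.2, (6/(p:ℝ))
        ≤ (1/((x.1:ℕ):ℝ)^2) * (24 / (d:ℝ)^((1:ℝ)/4)) := by
          apply mul_le_mul_of_nonneg_left hrb (by positivity)
      _ = 24/((d:ℝ)^((1:ℝ)/4) * (d:ℝ)^2 * (m:ℝ)^2) := by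
          rw [← hmn]
          rw [div_mul_div_comm]
          ring_nf
    -- done
  -- the per-d column bound
  have hcol : ∀ d ∈ Finset.range (M+1),
      ∑ m ∈ Finset.range (M+1), h (d, m) ≤ (48/y) * (1/(d:ℝ)^((5:ℝ)/4)) := by
    intro d _
    rcases Nat.eq_zero_or_pos d with rfl | hd1
    · have : ∀ m ∈ Finset.range (M+1), h (0, m) = 0 := by
        intro m _
        rw [hh]
        dsimp only
        rw [if_neg]
        push_cast
        rw [zero_mul]
        exact not_lt.mpr hy0.le
      rw [Finset.sum_congr rfl this, Finset.sum_const, smul_zero]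
      rw [Nat.cast_zero, Real.zero_rpow (by norm_num), div_zero]
      simp
    · have hdR : (0:ℝ) < (d:ℝ) := by exact_mod_cast hd1
      have hA : (0:ℝ) < (d:ℝ)^((1:ℝ)/4) := Real.rpow_pos_of_pos hdR _
      set A := (d:ℝ)^((1:ℝ)/4) with hAdef
      have hterm : ∀ m : ℕ, h (d, m) = (24/(A * (d:ℝ)^2)) * (if y/(d:ℝ) < (m:ℝ) then 1/(m:ℝ)^2 else 0) := by
        intro m
        rw [hh]
        dsimp only
        have hiff : (y < (d:ℝ)*(m:ℝ)) ↔ (y/(d:ℝ) < (m:ℝ)) := by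
          rw [div_lt_iff₀ hdR, mul_comm]
        rw [if_congr hiff rfl rfl]
        split
        · rw [div_mul_div_comm, hAdef]
          ring_nf
        · rw [mul_zero]
      rw [Finset.sum_congr rfl (fun m _ => hterm m), ← Finset.mul_sum]
      have htail := tail_sq (y/(d:ℝ)) (by positivity) (M+1)
      have h2dy : 2/(y/(d:ℝ)) = 2*(d:ℝ)/y := by
        field_simp
      rw [h2dy] at htail
      calc (24/(A * (d:ℝ)^2)) * ∑ m ∈ Finset.range (M+1), (if y/(d:ℝ) < (m:ℝ) then 1/(m:ℝ)^2 else 0)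
          ≤ (24/(A * (d:ℝ)^2)) * (2*(d:ℝ)/y) := by
            apply mul_le_mul_of_nonneg_left htail (by positivity)
        _ = (48/y) * (1/(d:ℝ)^((5:ℝ)/4)) := by
            have h54 : (d:ℝ)^((5:ℝ)/4) = A * (d:ℝ) := by
              rw [hAdef, show (5:ℝ)/4 = 1/4 + 1 by norm_num, Real.rpow_add hdR, Real.rpow_one]
            rw [h54]
            field_simp
            ring
  -- now the chain
  calc ∑ n ∈ s', (1 : ℝ) / (Nat.totient n) ^ 2
      ≤ ∑ n ∈ s', (1/(n:ℝ)^2) * ∑ t ∈ n.primeFactors.powerset, ∏ p ∈ t, (6/(p:ℝ)) := by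
        apply Finset.sum_le_sum
        intro n hn
        exact totient_sq_bound n (hn1 n hn)
    _ = ∑ n ∈ s', ∑ t ∈ n.primeFactors.powerset, (1/(n:ℝ)^2) * ∏ p ∈ t, (6/(p:ℝ)) := by
        apply Finset.sum_congr rfl
        intro n _
        rw [Finset.mul_sum]
    _ = ∑ x ∈ S, (1/((x.1:ℕ):ℝ)^2) * ∏ p ∈ x.2, (6/(p:ℝ)) := by
        rw [hS, Finset.sum_sigma']
    _ ≤ ∑ x ∈ S, h (e x) := Finset.sum_le_sum hpt
    _ = ∑ q ∈ S.image e, h q := (Finset.sum_image hinj).symm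
    _ ≤ ∑ q ∈ Finset.range (M+1) ×ˢ Finset.range (M+1), h q :=
        Finset.sum_le_sum_of_subset_of_nonneg himg (fun q _ _ => hh0 q)
    _ = ∑ d ∈ Finset.range (M+1), ∑ m ∈ Finset.range (M+1), h (d, m) := by
        rw [Finset.sum_product]
    _ ≤ ∑ d ∈ Finset.range (M+1), (48/y) * (1/(d:ℝ)^((5:ℝ)/4)) := Finset.sum_le_sum hcol
    _ = (48/y) * ∑ d ∈ Finset.range (M+1), 1/(d:ℝ)^((5:ℝ)/4) := by rw [Finset.mul_sum]
    _ ≤ (48/y) * Z := by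
        apply mul_le_mul_of_nonneg_left _ (by positivity)
        exact Summable.sum_le_tsum _ (fun d _ => by positivity) hZsum
    _ = 48*Z/y := by ring
end

section
/- Let n_k (k ≥ 1) be positive reals with n_k ≥ φ(k)², where φ is Euler's totient. Then the series Σ_{k=1}^∞ (1/n_k)·Σ_{dm=k} μ(d)/m converges absolutely, and for y ≥ 1 the tail satisfies |Σ_{k > y} (1/n_k)·Σ_{dm=k} μ(d)/m| = O(1/y). -/
open ArithmeticFunction Finset

noncomputable def serK : ℝ := ∑' d : ℕ, Real.sqrt 2 * ((d : ℝ) ^ (3/2 : ℝ))⁻¹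

lemma serK_summable : Summable (fun d : ℕ => Real.sqrt 2 * ((d : ℝ) ^ (3/2 : ℝ))⁻¹) :=
  (Real.summable_nat_rpow_inv.mpr (by norm_num)).mul_left _

lemma serK_nonneg : 0 ≤ serK := tsum_nonneg (fun d => by positivity)

noncomputable def PhiR : ArithmeticFunction ℝ := ⟨fun n => (Nat.totient n : ℝ), by simp⟩

lemma PhiR_apply (n : ℕ) : PhiR n = (Nat.totient n : ℝ) := rfl

lemma PhiR_mult : PhiR.IsMultiplicative := by
  constructor
  · simp [PhiR_apply]
  · intro m n h
    simp only [PhiR_apply, Nat.totient_mul h, Nat.cast_mul]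

noncomputable def Fb : ArithmeticFunction ℝ :=
  ArithmeticFunction.pdiv
    (ArithmeticFunction.pmul ((moebius : ArithmeticFunction ℤ) : ArithmeticFunction ℝ)
      ((moebius : ArithmeticFunction ℤ) : ArithmeticFunction ℝ)) PhiR

lemma Fb_apply (n : ℕ) : Fb n = (moebius n : ℝ) * (moebius n : ℝ) / (Nat.totient n : ℝ) := rfl

lemma Fb_mult : Fb.IsMultiplicative :=
  (isMultiplicative_moebius.intCast.pmul isMultiplicative_moebius.intCast).pdiv PhiR_mult

lemma Fb_nonneg (n : ℕ) : 0 ≤ Fb n := by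
  rw [Fb_apply]
  apply div_nonneg (mul_self_nonneg _) (by positivity)


lemma sum_divisors_pp {p : ℕ} (hp : p.Prime) {i : ℕ} (hi : i ≠ 0) (f : ℕ → ℝ)
    (hf : ∀ j, 2 ≤ j → f (p ^ j) = 0) :
    ∑ d ∈ (p ^ i).divisors, f d = f 1 + f p := by
  rw [Nat.sum_divisors_prime_pow hp]
  have h2 : 2 ≤ i + 1 := by omega
  rw [Finset.range_eq_Ico, ← Finset.sum_Ico_consecutive _ (by omega : 0 ≤ 2) h2]
  have : ∑ j ∈ Finset.Ico 2 (i + 1), f (p ^ j) = 0 :=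
    Finset.sum_eq_zero fun j hj => hf j (Finset.mem_Ico.mp hj).1
  rw [this, add_zero]
  show ∑ j ∈ Finset.range 2, f (p ^ j) = _
  simp [Finset.sum_range_succ, pow_one]
lemma Fb_pp_zero {p : ℕ} (hp : p.Prime) {j : ℕ} (hj : 2 ≤ j) : Fb (p ^ j) = 0 := by
  rw [Fb_apply, moebius_apply_prime_pow hp (by omega : j ≠ 0), if_neg (by omega)]
  simp

lemma factB {k : ℕ} (hk : k ≠ 0) :
    ∑ d ∈ k.divisors, Fb d = (k : ℝ) / (Nat.totient k : ℝ) := by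
  have key : ArithmeticFunction.pmul PhiR (Fb * (ArithmeticFunction.zeta : ArithmeticFunction ℝ)) =
      ((ArithmeticFunction.id : ArithmeticFunction ℕ) : ArithmeticFunction ℝ) := by
    rw [ArithmeticFunction.IsMultiplicative.eq_iff_eq_on_prime_powers _
      (PhiR_mult.pmul (Fb_mult.mul isMultiplicative_zeta.natCast)) _
      isMultiplicative_id.natCast]
    intro p i hp
    rcases Nat.eq_zero_or_pos i with rfl | hi
    · simp only [pow_zero]
      rw [(PhiR_mult.pmul (Fb_mult.mul isMultiplicative_zeta.natCast)).map_one,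
        isMultiplicative_id.natCast.map_one]
    have hp1 : (1:ℝ) < (p:ℝ) := by exact_mod_cast hp.one_lt
    have hpm1 : (p:ℝ) - 1 ≠ 0 := by linarith
    rw [pmul_apply, coe_mul_zeta_apply,
      sum_divisors_pp hp hi.ne' _ (fun j hj => Fb_pp_zero hp hj)]
    have h1 : Fb 1 = 1 := Fb_mult.map_one
    have h2 : Fb p = ((p:ℝ) - 1)⁻¹ := by
      rw [Fb_apply, moebius_apply_prime hp, Nat.totient_prime hp]
      push_cast [Nat.cast_sub hp.one_lt.le]
      field_simp
    have h3 : PhiR (p ^ i) = (p:ℝ) ^ (i-1) * ((p:ℝ) - 1) := by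
      rw [PhiR_apply, Nat.totient_prime_pow hp hi]
      push_cast [Nat.cast_sub hp.one_lt.le]
      ring
    rw [h1, h2, h3, natCoe_apply, id_apply]
    have : ((p:ℝ)^i : ℝ) = (p:ℝ)^(i-1) * (p:ℝ) := by
      rw [← pow_succ]
      congr 1
      omega
    push_cast
    rw [this]
    field_simp
    ring
  have := congrArg (fun f => f k) key
  simp only [pmul_apply, coe_mul_zeta_apply, natCoe_apply, id_apply] at this
  rw [PhiR_apply] at this
  have hφ : (0:ℝ) < (Nat.totient k : ℝ) := by
    exact_mod_cast Nat.totient_pos.mpr (Nat.pos_of_ne_zero hk)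
  field_simp
  linarith [this]

noncomputable def Hb : ArithmeticFunction ℝ :=
  (ArithmeticFunction.pmul ((moebius : ArithmeticFunction ℤ) : ArithmeticFunction ℝ)
    ((ArithmeticFunction.id : ArithmeticFunction ℕ) : ArithmeticFunction ℝ)) * ArithmeticFunction.zeta

lemma Hb_mult : Hb.IsMultiplicative :=
  ((isMultiplicative_moebius.intCast.pmul isMultiplicative_id.natCast).mul
    isMultiplicative_zeta.natCast)

lemma Hb_apply {k : ℕ} : Hb k = ∑ d ∈ k.divisors, (moebius d : ℝ) * (d : ℝ) := by
  rw [Hb, coe_mul_zeta_apply]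
  exact Finset.sum_congr rfl fun d _ => rfl

lemma factA {k : ℕ} (hk : k ≠ 0) :
    |∑ d ∈ k.divisors, (moebius d : ℝ) * (d : ℝ)| ≤ (Nat.totient k : ℝ) := by
  rw [← Hb_apply]
  rw [Hb_mult.multiplicative_factorization Hb hk]
  have hφ : (Nat.totient k : ℝ) =
      k.factorization.prod fun p i => (Nat.totient (p ^ i) : ℝ) := by
    rw [Nat.multiplicative_factorization Nat.totient (@Nat.totient_mul) Nat.totient_one hk]
    rw [Finsupp.prod, Finsupp.prod, Nat.cast_prod]
  rw [hφ, Finsupp.prod, Finsupp.prod, Finset.abs_prod]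
  apply Finset.prod_le_prod (fun p _ => abs_nonneg _)
  intro p hp
  have hpp : p.Prime := Nat.prime_of_mem_primeFactors (by rwa [Nat.support_factorization] at hp)
  have hi : k.factorization p ≠ 0 := Finsupp.mem_support_iff.mp hp
  set i := k.factorization p with hidef
  have hHb : Hb (p ^ i) = 1 - (p : ℝ) := by
    rw [Hb_apply, sum_divisors_pp hpp hi _ ?_]
    · rw [moebius_apply_one, moebius_apply_prime hpp]
      push_cast; ring
    · intro j hj
      rw [moebius_apply_prime_pow hpp (by omega : j ≠ 0), if_neg (by omega)]
      simp
  rw [hHb]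
  have hp1 : (1:ℝ) < (p:ℝ) := by exact_mod_cast hpp.one_lt
  rw [abs_sub_comm, abs_of_nonneg (by linarith)]
  have : (p - 1 : ℕ) ≤ Nat.totient (p ^ i) := by
    rw [Nat.totient_prime_pow hpp (Nat.pos_of_ne_zero hi)]
    exact Nat.le_mul_of_pos_left _ (pow_pos hpp.pos _)
  calc (p:ℝ) - 1 = ((p - 1 : ℕ) : ℝ) := by
        rw [Nat.cast_sub hpp.one_lt.le]; norm_num
    _ ≤ _ := by exact_mod_cast this


lemma pf_le_sq {p : ℕ} (hpp : p.Prime) (hp2 : p ≠ 2) : p ≤ (p - 1) ^ 2 := by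
  have h3 : 3 ≤ p := by have := hpp.two_le; omega
  have hq2 : 2 ≤ p - 1 := by omega
  calc p ≤ 2 * (p - 1) := by omega
    _ ≤ (p - 1) * (p - 1) := Nat.mul_le_mul_right _ hq2
    _ = (p - 1) ^ 2 := (sq (p-1)).symm

lemma factC {d : ℕ} (hd : Squarefree d) : d ≤ 2 * Nat.totient d ^ 2 := by
  have hd0 : d ≠ 0 := hd.ne_zero
  have hprod : ∏ p ∈ d.primeFactors, p = d := Nat.prod_primeFactors_of_squarefree hd
  have hφ : Nat.totient d = ∏ p ∈ d.primeFactors, (p - 1) := by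
    have h := Nat.totient_mul_prod_primeFactors d
    rw [hprod] at h
    exact Nat.eq_of_mul_eq_mul_right (Nat.pos_of_ne_zero hd0) (by linarith [h.symm])
  have key : ∏ p ∈ d.primeFactors, p ≤ 2 * ∏ p ∈ d.primeFactors, (p - 1) ^ 2 := by
    by_cases h2 : 2 ∈ d.primeFactors
    · rw [← Finset.mul_prod_erase _ _ h2, ← Finset.mul_prod_erase _ (fun p => (p-1)^2) h2]
      have hrest : ∏ p ∈ d.primeFactors.erase 2, p ≤ ∏ p ∈ d.primeFactors.erase 2, (p - 1) ^ 2 :=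
        Finset.prod_le_prod' fun p hp =>
          pf_le_sq (Nat.prime_of_mem_primeFactors (Finset.mem_of_mem_erase hp))
            (Finset.ne_of_mem_erase hp)
      norm_num
      omega
    · have hrest : ∏ p ∈ d.primeFactors, p ≤ ∏ p ∈ d.primeFactors, (p - 1) ^ 2 :=
        Finset.prod_le_prod' fun p hp =>
          pf_le_sq (Nat.prime_of_mem_primeFactors hp) (fun h => h2 (h ▸ hp))
      omega
  calc d = ∏ p ∈ d.primeFactors, p := hprod.symm
    _ ≤ 2 * ∏ p ∈ d.primeFactors, (p - 1) ^ 2 := key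
    _ = 2 * Nat.totient d ^ 2 := by rw [hφ, ← Finset.prod_pow]


lemma tailT (M : Finset ℕ) (d : ℕ) (hd : d ≠ 0) (y : ℝ) (hy : 0 < y)
    (h : ∀ m ∈ M, y < (d : ℝ) * (m : ℝ)) :
    ∑ m ∈ M, ((m : ℝ) ^ 2)⁻¹ ≤ 2 * (d : ℝ) / y := by
  have hd' : (0:ℝ) < (d:ℝ) := by exact_mod_cast Nat.pos_of_ne_zero hd
  set k0 := Nat.floor (y / d) with hk0
  have hsub : M ⊆ Finset.Ioo k0 (M.sup _root_.id + 1) := by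
    intro m hm
    rw [Finset.mem_Ioo]
    constructor
    · rw [hk0, Nat.floor_lt (le_of_lt (div_pos hy hd'))]
      rw [div_lt_iff₀ hd']
      calc y < (d:ℝ) * m := h m hm
        _ = (m:ℝ) * d := by ring
    · exact Nat.lt_succ_of_le (Finset.le_sup (f := _root_.id) hm)
  calc ∑ m ∈ M, ((m : ℝ) ^ 2)⁻¹
      ≤ ∑ m ∈ Finset.Ioo k0 (M.sup _root_.id + 1), ((m : ℝ) ^ 2)⁻¹ :=
        Finset.sum_le_sum_of_subset_of_nonneg hsub (fun i _ _ => by positivity)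
    _ ≤ 2 / ((k0 : ℝ) + 1) := sum_Ioo_inv_sq_le k0 _
    _ ≤ 2 * (d : ℝ) / y := by
        rw [div_le_div_iff₀ (by positivity) hy]
        have : y / d < (k0 : ℝ) + 1 := Nat.lt_floor_add_one _
        have h2 : y < d * ((k0:ℝ) + 1) := by
          rw [div_lt_iff₀ hd'] at this
          linarith [this]
        nlinarith [h2]

lemma bound1 {k : ℕ} (hk : k ≠ 0) :
    |∑ p ∈ k.divisorsAntidiagonal, (moebius p.1 : ℝ) / (p.2 : ℝ)| ≤
      (Nat.totient k : ℝ) / (k : ℝ) := by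
  have hk' : (0:ℝ) < (k:ℝ) := by exact_mod_cast Nat.pos_of_ne_zero hk
  have step : ∑ p ∈ k.divisorsAntidiagonal, (moebius p.1 : ℝ) / (p.2 : ℝ)
      = (∑ p ∈ k.divisorsAntidiagonal, (moebius p.1 : ℝ) * (p.1 : ℝ)) / (k : ℝ) := by
    rw [Finset.sum_div]
    apply Finset.sum_congr rfl
    intro p hp
    obtain ⟨hpk, -⟩ := Nat.mem_divisorsAntidiagonal.mp hp
    have h1 : (p.1:ℝ) ≠ 0 := by
      have : p.1 ≠ 0 := by rintro h; rw [h] at hpk; simp at hpk; omega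
      exact_mod_cast this
    have h2 : (p.2:ℝ) ≠ 0 := by
      have : p.2 ≠ 0 := by rintro h; rw [h] at hpk; simp at hpk; omega
      exact_mod_cast this
    have hcast : (k:ℝ) = (p.1:ℝ) * (p.2:ℝ) := by exact_mod_cast hpk.symm
    rw [hcast]
    field_simp
  rw [step]
  have step2 : ∑ p ∈ k.divisorsAntidiagonal, (moebius p.1 : ℝ) * (p.1 : ℝ)
      = ∑ d ∈ k.divisors, (moebius d : ℝ) * (d : ℝ) :=
    Nat.sum_divisorsAntidiagonal (fun d m => (moebius d : ℝ) * (d : ℝ))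
  rw [step2, abs_div, abs_of_pos hk']
  gcongr
  exact factA hk

lemma factD {d : ℕ} (hd : d ≠ 0) :
    Fb d / (d : ℝ) ≤ Real.sqrt 2 * ((d : ℝ) ^ (3/2 : ℝ))⁻¹ := by
  have hd1 : (1:ℝ) ≤ (d:ℝ) := by exact_mod_cast Nat.one_le_iff_ne_zero.mpr hd
  have hd0 : (0:ℝ) < (d:ℝ) := by linarith
  by_cases hμ : moebius d = 0
  · rw [Fb_apply, hμ]
    push_cast
    simp only [zero_mul, zero_div]
    positivity
  · have hsq : Squarefree d := moebius_ne_zero_iff_squarefree.mp hμ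
    have hμ2 : (moebius d : ℝ) * (moebius d : ℝ) = 1 := by
      rcases moebius_ne_zero_iff_eq_or.mp hμ with h | h <;> rw [h] <;> norm_num
    rw [Fb_apply, hμ2]
    have hφpos : (0:ℝ) < (Nat.totient d : ℝ) := by
      exact_mod_cast Nat.totient_pos.mpr (Nat.pos_of_ne_zero hd)
    have hC : (d:ℝ) ≤ 2 * (Nat.totient d : ℝ)^2 := by exact_mod_cast factC hsq
    -- √d ≤ √2 * φ d
    have h1 : Real.sqrt d ≤ Real.sqrt 2 * (Nat.totient d : ℝ) := by
      have := Real.sqrt_le_sqrt hC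
      rwa [Real.sqrt_mul (by norm_num) , Real.sqrt_sq hφpos.le] at this
    have hrw : (d:ℝ) ^ (3/2 : ℝ) = (d:ℝ) * Real.sqrt d := by
      rw [Real.sqrt_eq_rpow, ← Real.rpow_one_add' (by positivity) (by norm_num)]
      norm_num
    rw [hrw]
    rw [div_div, div_le_iff₀ (by positivity)]
    have expand : Real.sqrt 2 * ((d:ℝ) * Real.sqrt d)⁻¹ * ((Nat.totient d:ℝ) * d)
        = (Real.sqrt 2 * (Nat.totient d:ℝ)) * (Real.sqrt d)⁻¹ := by
      field_simp
    rw [expand]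
    calc (1:ℝ) = Real.sqrt d * (Real.sqrt d)⁻¹ := by
          rw [mul_inv_cancel₀ (by positivity)]
      _ ≤ (Real.sqrt 2 * (Nat.totient d:ℝ)) * (Real.sqrt d)⁻¹ := by
          apply mul_le_mul_of_nonneg_right h1 (by positivity)

lemma main_sum (y : ℝ) (hy : 0 < y) (S : Finset ℕ) (hS : ∀ k ∈ S, y < (k : ℝ)) :
    ∑ k ∈ S, ((k : ℝ) * (Nat.totient k : ℝ))⁻¹ ≤ 2 * serK / y := by
  classical
  have hk0 : ∀ k ∈ S, k ≠ 0 := by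
    intro k hk h0
    have := hS k hk
    rw [h0] at this
    simp at this
    linarith
  -- step 1 : rewrite each term as a sum over divisorsAntidiagonal
  set G : ℕ × ℕ → ℝ := fun p => Fb p.1 * (((p.1 * p.2 : ℕ) : ℝ) ^ 2)⁻¹ with hG
  have step1 : ∀ k ∈ S, ((k : ℝ) * (Nat.totient k : ℝ))⁻¹
      = ∑ p ∈ k.divisorsAntidiagonal, G p := by
    intro k hk
    have hkne := hk0 k hk
    have hkpos : (0:ℝ) < (k:ℝ) := by exact_mod_cast Nat.pos_of_ne_zero hkne
    have hφpos : (0:ℝ) < (Nat.totient k : ℝ) := by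
      exact_mod_cast Nat.totient_pos.mpr (Nat.pos_of_ne_zero hkne)
    have e1 : ∑ p ∈ k.divisorsAntidiagonal, G p
        = ∑ p ∈ k.divisorsAntidiagonal, Fb p.1 * (((k:ℕ):ℝ) ^ 2)⁻¹ := by
      apply Finset.sum_congr rfl
      intro p hp
      obtain ⟨hpk, -⟩ := Nat.mem_divisorsAntidiagonal.mp hp
      rw [hG]
      simp only
      rw [hpk]
    have e2 : ∑ p ∈ k.divisorsAntidiagonal, Fb p.1 * (((k:ℕ):ℝ) ^ 2)⁻¹
        = (∑ d ∈ k.divisors, Fb d) * (((k:ℕ):ℝ) ^ 2)⁻¹ := by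
      rw [← Finset.sum_mul]
      congr 1
      exact Nat.sum_divisorsAntidiagonal (fun d m => Fb d)
    rw [e1, e2, factB hkne]
    field_simp
  rw [Finset.sum_congr rfl step1]
  -- step 2 : biUnion
  have hdisj : (S : Set ℕ).PairwiseDisjoint (fun k => k.divisorsAntidiagonal) := by
    intro a ha b hb hab
    simp only [Function.onFun, Finset.disjoint_left]
    intro p hpa hpb
    obtain ⟨h1, -⟩ := Nat.mem_divisorsAntidiagonal.mp hpa
    obtain ⟨h2, -⟩ := Nat.mem_divisorsAntidiagonal.mp hpb
    exact hab (h1 ▸ h2.symm ▸ rfl)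
  rw [← Finset.sum_biUnion hdisj]
  set P := S.biUnion (fun k => k.divisorsAntidiagonal) with hP
  have hPmem : ∀ p ∈ P, p.1 ≠ 0 ∧ y < (p.1 : ℝ) * (p.2 : ℝ) := by
    intro p hp
    rw [hP, Finset.mem_biUnion] at hp
    obtain ⟨k, hkS, hpk⟩ := hp
    obtain ⟨h1, h2⟩ := Nat.mem_divisorsAntidiagonal.mp hpk
    constructor
    · rintro h0; rw [h0] at h1; simp at h1; exact h2 h1.symm
    · have : ((p.1 * p.2 : ℕ):ℝ) = (k:ℝ) := by rw [h1]
      push_cast at this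
      rw [this]
      exact hS k hkS
  -- step 3 : fiberwise over first coordinate
  rw [← Finset.sum_fiberwise_of_maps_to (fun p hp => Finset.mem_image_of_mem Prod.fst hp) G]
  -- bound each fiber
  have fiber_bound : ∀ d ∈ P.image Prod.fst,
      ∑ p ∈ P.filter (fun p => p.1 = d), G p ≤ (2 / y) * (Fb d / (d:ℝ)) := by
    intro d hd
    obtain ⟨q, hqP, hq1⟩ := Finset.mem_image.mp hd
    have hdne : d ≠ 0 := hq1 ▸ (hPmem q hqP).1
    have hdpos : (0:ℝ) < (d:ℝ) := by exact_mod_cast Nat.pos_of_ne_zero hdne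
    have e3 : ∑ p ∈ P.filter (fun p => p.1 = d), G p
        = (Fb d * ((d:ℝ)^2)⁻¹) * ∑ p ∈ P.filter (fun p => p.1 = d), (((p.2:ℕ):ℝ)^2)⁻¹ := by
      rw [Finset.mul_sum]
      apply Finset.sum_congr rfl
      intro p hp
      obtain ⟨-, hp1⟩ := Finset.mem_filter.mp hp
      rw [hG]
      simp only
      rw [hp1]
      push_cast
      rw [mul_pow, mul_inv]
      ring
    rw [e3]
    have e4 : ∑ p ∈ P.filter (fun p => p.1 = d), (((p.2:ℕ):ℝ)^2)⁻¹
        = ∑ m ∈ (P.filter (fun p => p.1 = d)).image Prod.snd, ((m:ℝ)^2)⁻¹ := by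
      rw [Finset.sum_image]
      intro p hp q hq hpq
      obtain ⟨-, hp1⟩ := Finset.mem_filter.mp hp
      obtain ⟨-, hq1⟩ := Finset.mem_filter.mp hq
      exact Prod.ext (hp1.trans hq1.symm) hpq
    rw [e4]
    have htail : ∑ m ∈ (P.filter (fun p => p.1 = d)).image Prod.snd, ((m:ℝ)^2)⁻¹
        ≤ 2 * (d:ℝ) / y := by
      apply tailT _ d hdne y hy
      intro m hm
      obtain ⟨p, hp, hpm⟩ := Finset.mem_image.mp hm
      obtain ⟨hpP, hp1⟩ := Finset.mem_filter.mp hp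
      have := (hPmem p hpP).2
      rw [hp1, hpm] at this
      exact this
    calc Fb d * ((d:ℝ)^2)⁻¹ * ∑ m ∈ (P.filter (fun p => p.1 = d)).image Prod.snd, ((m:ℝ)^2)⁻¹
        ≤ Fb d * ((d:ℝ)^2)⁻¹ * (2 * (d:ℝ) / y) := by
          apply mul_le_mul_of_nonneg_left htail (mul_nonneg (Fb_nonneg d) (by positivity))
      _ = (2 / y) * (Fb d / (d:ℝ)) := by field_simp
  calc ∑ d ∈ P.image Prod.fst, ∑ p ∈ P.filter (fun p => p.1 = d), G p
      ≤ ∑ d ∈ P.image Prod.fst, (2 / y) * (Fb d / (d:ℝ)) := Finset.sum_le_sum fiber_bound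
    _ = (2 / y) * ∑ d ∈ P.image Prod.fst, (Fb d / (d:ℝ)) := by rw [Finset.mul_sum]
    _ ≤ (2 / y) * serK := by
        apply mul_le_mul_of_nonneg_left _ (by positivity)
        have hle : ∀ d ∈ P.image Prod.fst, Fb d / (d:ℝ) ≤ Real.sqrt 2 * ((d:ℝ)^(3/2:ℝ))⁻¹ := by
          intro d hd
          obtain ⟨q, hqP, hq1⟩ := Finset.mem_image.mp hd
          exact factD (hq1 ▸ (hPmem q hqP).1)
        calc ∑ d ∈ P.image Prod.fst, Fb d / (d:ℝ)
            ≤ ∑ d ∈ P.image Prod.fst, Real.sqrt 2 * ((d:ℝ)^(3/2:ℝ))⁻¹ :=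
              Finset.sum_le_sum hle
          _ ≤ serK := Summable.sum_le_tsum _ (fun d _ => by positivity) serK_summable
    _ = 2 * serK / y := by ring

set_option maxHeartbeats 1000000 in
theorem series_and_tail_bound :
    ∃ c > (0 : ℝ), ∀ n : ℕ → ℝ, (∀ k, 0 < n k) →
      (∀ k, 1 ≤ k → ((Nat.totient k : ℝ)) ^ 2 ≤ n k) →
      Summable (fun k : ℕ =>
        |(1 / n k) * ∑ p ∈ k.divisorsAntidiagonal, (moebius p.1 : ℝ) / p.2|) ∧
      ∀ y : ℝ, 1 ≤ y →
        |∑' k : ℕ, (if y < (k : ℝ) then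
            (1 / n k) * ∑ p ∈ k.divisorsAntidiagonal, (moebius p.1 : ℝ) / p.2
          else 0)| ≤ c / y := by
  classical
  refine ⟨2 * serK + 1, by linarith [serK_nonneg], ?_⟩
  intro n hn hn2
  set a : ℕ → ℝ := fun k =>
    (1 / n k) * ∑ p ∈ k.divisorsAntidiagonal, (moebius p.1 : ℝ) / p.2 with ha
  have ha0 : a 0 = 0 := by
    rw [ha]; simp
  have habs : ∀ k : ℕ, k ≠ 0 → |a k| ≤ ((k : ℝ) * (Nat.totient k : ℝ))⁻¹ := by
    intro k hk
    have hkpos : (0:ℝ) < (k:ℝ) := by exact_mod_cast Nat.pos_of_ne_zero hk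
    have hφpos : (0:ℝ) < (Nat.totient k : ℝ) := by
      exact_mod_cast Nat.totient_pos.mpr (Nat.pos_of_ne_zero hk)
    have h1 : 1 / n k ≤ ((Nat.totient k : ℝ) ^ 2)⁻¹ := by
      rw [one_div]
      apply inv_anti₀ (by positivity) (hn2 k (Nat.one_le_iff_ne_zero.mpr hk))
    have h2 := bound1 hk
    rw [ha]
    simp only
    rw [abs_mul, abs_of_pos (one_div_pos.mpr (hn k))]
    calc (1 / n k) * |∑ p ∈ k.divisorsAntidiagonal, (moebius p.1 : ℝ) / p.2|
        ≤ ((Nat.totient k : ℝ) ^ 2)⁻¹ * ((Nat.totient k : ℝ) / (k : ℝ)) := by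
          apply mul_le_mul h1 h2 (abs_nonneg _) (by positivity)
      _ = ((k : ℝ) * (Nat.totient k : ℝ))⁻¹ := by
          field_simp
  -- the comparison function
  set G : ℕ → ℝ := fun k => if k = 0 then 0 else ((k : ℝ) * (Nat.totient k : ℝ))⁻¹ with hGdef
  have hGnonneg : ∀ k, 0 ≤ G k := by
    intro k
    rw [hGdef]
    by_cases h : k = 0 <;> simp [h] <;> positivity
  have hGsummable : Summable G := by
    apply summable_of_sum_le hGnonneg
    intro u
    have : ∑ k ∈ u, G k = ∑ k ∈ u.filter (fun k : ℕ => k ≠ 0), ((k : ℝ) * (Nat.totient k : ℝ))⁻¹ := by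
      rw [Finset.sum_filter]
      apply Finset.sum_congr rfl
      intro k _
      rw [hGdef]
      by_cases h : k = 0 <;> simp [h]
    rw [this]
    calc ∑ k ∈ u.filter (fun k : ℕ => k ≠ 0), ((k : ℝ) * (Nat.totient k : ℝ))⁻¹
        ≤ 2 * serK / (1/2 : ℝ) := by
          apply main_sum (1/2 : ℝ) (by norm_num)
          intro k hk
          have : k ≠ 0 := (Finset.mem_filter.mp hk).2
          have : (1:ℝ) ≤ (k:ℝ) := by exact_mod_cast Nat.one_le_iff_ne_zero.mpr this
          linarith
      _ = 4 * serK := by ring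
  have habs' : ∀ k, |a k| ≤ G k := by
    intro k
    by_cases h : k = 0
    · rw [h, ha0, hGdef]; simp
    · rw [hGdef]; simp only [h, if_false]; exact habs k h
  have hsuma : Summable (fun k => |a k|) :=
    Summable.of_nonneg_of_le (fun k => abs_nonneg _) habs' hGsummable
  constructor
  · exact hsuma
  intro y hy
  set t : ℕ → ℝ := fun k => if y < (k : ℝ) then a k else 0 with htdef
  have htabs : ∀ k, |t k| ≤ |a k| := by
    intro k
    rw [htdef]
    by_cases h : y < (k:ℝ) <;> simp [h, abs_nonneg]
  have hts : Summable (fun k => |t k|) :=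
    Summable.of_nonneg_of_le (fun k => abs_nonneg _) htabs hsuma
  have ht : Summable t := hts.of_abs
  have step : |∑' k, t k| ≤ ∑' k, |t k| := by
    simpa [Real.norm_eq_abs] using norm_tsum_le_tsum_norm (f := t) (by simpa [Real.norm_eq_abs] using hts)
  have step2 : ∑' k, |t k| ≤ 2 * serK / y := by
    apply Summable.tsum_le_of_sum_le hts
    intro u
    have e : ∑ k ∈ u, |t k| = ∑ k ∈ u.filter (fun k : ℕ => y < (k:ℝ)), |a k| := by
      rw [Finset.sum_filter]
      apply Finset.sum_congr rfl
      intro k _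
      rw [htdef]
      by_cases h : y < (k:ℝ) <;> simp [h]
    rw [e]
    have hne : ∀ k ∈ u.filter (fun k : ℕ => y < (k:ℝ)), k ≠ 0 := by
      intro k hk h0
      have := (Finset.mem_filter.mp hk).2
      rw [h0] at this
      simp at this
      linarith
    calc ∑ k ∈ u.filter (fun k : ℕ => y < (k:ℝ)), |a k|
        ≤ ∑ k ∈ u.filter (fun k : ℕ => y < (k:ℝ)), ((k : ℝ) * (Nat.totient k : ℝ))⁻¹ :=
          Finset.sum_le_sum (fun k hk => habs k (hne k hk))
      _ ≤ 2 * serK / y := main_sum y (by linarith) _ (fun k hk => (Finset.mem_filter.mp hk).2)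
  calc |∑' k, t k| ≤ ∑' k, |t k| := step
    _ ≤ 2 * serK / y := step2
    _ ≤ (2 * serK + 1) / y := by
        apply div_le_div_of_nonneg_right _ (by linarith)
        linarith
end
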